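/- arXiv:1908.00782 — 8 statements merged into one kernel-verified Lean document; each statement's English description precedes it below -/
import Mathlib

section
/- Let $n\ge 2$, integers $a_1,\dots,a_n\ge 2$, sequence $\mu_1=1$, $\mu_2=a_1$, $\mu_i=a_{i-1}\mu_{i-1}-\mu_{i-2}$, and integers $r_1,\dots,r_n$ with $|r_i|\le a_i-2$ for all $i$. If $r_n\neq 0$, then $|r_n\mu_n| - |r_{n-1}\mu_{n-1}| > 0$. -/
theorem stmt_5 (n : ℕ) (hn : 2 ≤ n) (a μ r : ℕ → ℤ)
    (ha : ∀ i, 1 ≤ i → i ≤ n → 2 ≤ a i)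
    (hμ1 : μ 1 = 1) (hμ2 : μ 2 = a 1)
    (hμ : ∀ i, 3 ≤ i → i ≤ n → μ i = a (i - 1) * μ (i - 1) - μ (i - 2))
    (hr : ∀ i, 1 ≤ i → i ≤ n → |r i| ≤ a i - 2)
    (hrn : r n ≠ 0) :
    0 < |r n * μ n| - |r (n - 1) * μ (n - 1)| := by
  have key : ∀ i, 2 ≤ i → i ≤ n → 1 ≤ μ (i - 1) ∧ μ (i - 1) + 1 ≤ μ i := by
    intro i hi
    induction i, hi using Nat.le_induction with
    | base =>
      intro _
      have h1 : 2 ≤ a 1 := ha 1 (by omega) (by omega)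
      rw [show (2:ℕ)-1 = 1 from rfl, hμ1, hμ2]
      constructor
      · norm_num
      · linarith
    | succ i hi ih =>
      intro hin
      obtain ⟨h1, h2⟩ := ih (by omega)
      have hrec := hμ (i + 1) (by omega) hin
      have hai : 2 ≤ a i := ha i (by omega) (by omega)
      have e1 : i + 1 - 1 = i := by omega
      have e2 : i + 1 - 2 = i - 1 := by omega
      rw [e1, e2] at hrec
      rw [e1]
      constructor
      · linarith
      · nlinarith
  obtain ⟨h1, h2⟩ := key n hn le_rfl
  have hrn1 : 1 ≤ |r n| := Int.one_le_abs hrn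
  have hrn2 : |r (n - 1)| ≤ a (n - 1) - 2 := hr (n - 1) (by omega) (by omega)
  have hμpos : 0 < μ n := by linarith
  have hμpos' : 0 < μ (n - 1) := by linarith
  rw [abs_mul, abs_mul, abs_of_pos hμpos, abs_of_pos hμpos']
  rcases eq_or_lt_of_le hn with h | h
  · -- n = 2
    have hn2 : n = 2 := h.symm
    subst hn2
    simp only [show (2:ℕ) - 1 = 1 from rfl] at *
    have ha1 : 2 ≤ a 1 := ha 1 (by omega) (by omega)
    rw [hμ1, hμ2]
    nlinarith [abs_nonneg (r 1)]
  · -- n ≥ 3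
    have hn3 : 3 ≤ n := h
    have hrec := hμ n hn3 le_rfl
    obtain ⟨g1, g2⟩ := key (n - 1) (by omega) (by omega)
    have e : n - 1 - 1 = n - 2 := by omega
    rw [e] at g1 g2
    have hai : 2 ≤ a (n - 1) := ha (n - 1) (by omega) (by omega)
    nlinarith [abs_nonneg (r (n - 1))]
end

section
/- Let $n\ge 2$, integers $a_1,\dots,a_n\ge 2$, sequence $\mu_1=1$, $\mu_2=a_1$, $\mu_i=a_{i-1}\mu_{i-1}-\mu_{i-2}$, and integers $r_1,\dots,r_n$ with $|r_i|\le a_i-2$. If $r_n\neq 0$, then $|r_n\mu_n| > \left|\sum_{i=1}^{n-1} r_i\mu_i\right|$. -/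
theorem stmt_6 (n : ℕ) (hn : 2 ≤ n) (a μ r : ℕ → ℤ)
    (ha : ∀ i, 1 ≤ i → i ≤ n → 2 ≤ a i)
    (hμ1 : μ 1 = 1) (hμ2 : μ 2 = a 1)
    (hμ : ∀ i, 3 ≤ i → i ≤ n → μ i = a (i - 1) * μ (i - 1) - μ (i - 2))
    (hr : ∀ i, 1 ≤ i → i ≤ n → |r i| ≤ a i - 2)
    (hrn : r n ≠ 0) :
    |∑ i ∈ Finset.Icc 1 (n - 1), r i * μ i| < |r n * μ n| := by
  -- monotonicity and positivity
  have mono : ∀ i, 2 ≤ i → i ≤ n → 1 ≤ μ (i - 1) ∧ μ (i - 1) < μ i := by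
    intro i
    induction i using Nat.strong_induction_on with
    | _ i ih =>
      intro h2 hin
      rcases eq_or_lt_of_le h2 with h | h
      · subst h
        refine ⟨by simp [hμ1], ?_⟩
        have := ha 1 (by omega) (by omega)
        simp only [hμ1, hμ2]
        omega
      · have hprev := ih (i - 1) (by omega) (by omega) (by omega)
        have e1 : i - 1 - 1 = i - 2 := by omega
        rw [e1] at hprev
        obtain ⟨h1, h2'⟩ := hprev
        have hrec := hμ i (by omega) hin
        have hai := ha (i - 1) (by omega) (by omega)
        constructor
        · linarith
        · nlinarith
  have key : ∀ m, 2 ≤ m → m ≤ n →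
      ∑ i ∈ Finset.Icc 1 (m - 1), (a i - 2) * μ i < μ m := by
    intro m
    induction m using Nat.strong_induction_on with
    | _ m ih =>
      intro h2 hmn
      rcases eq_or_lt_of_le h2 with h | h
      · subst h
        simp [hμ1, hμ2]
      · have hprev := ih (m - 1) (by omega) (by omega) (by omega)
        have e1 : m - 1 - 1 = m - 2 := by omega
        rw [e1] at hprev
        have hsplit : ∑ i ∈ Finset.Icc 1 (m - 1), (a i - 2) * μ i
            = ∑ i ∈ Finset.Icc 1 (m - 2), (a i - 2) * μ i
              + (a (m - 1) - 2) * μ (m - 1) := by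
          have e2 : m - 1 = (m - 2) + 1 := by omega
          rw [e2, Finset.sum_Icc_succ_top (by omega), ← e2]
        have hmono := mono m h2 hmn
        have hmono' := mono (m - 1) (by omega) (by omega)
        rw [e1] at hmono'
        have hrec := hμ m (by omega) hmn
        have hai := ha (m - 1) (by omega) (by omega)
        rw [hsplit]
        nlinarith
  have hμpos : ∀ i, 1 ≤ i → i ≤ n → 1 ≤ μ i := by
    intro i h1 h2
    rcases eq_or_lt_of_le h2 with h | h
    · subst h
      have := mono i (by omega) le_rfl
      linarith [this.1, this.2]
    · have := mono (i + 1) (by omega) (by omega)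
      simpa using this.1
  have habs : |∑ i ∈ Finset.Icc 1 (n - 1), r i * μ i|
      ≤ ∑ i ∈ Finset.Icc 1 (n - 1), (a i - 2) * μ i := by
    refine le_trans (Finset.abs_sum_le_sum_abs _ _) ?_
    apply Finset.sum_le_sum
    intro i hi
    simp only [Finset.mem_Icc] at hi
    have hμi := hμpos i hi.1 (by omega)
    have hri := hr i hi.1 (by omega)
    rw [abs_mul, abs_of_pos (by linarith : (0:ℤ) < μ i)]
    have : 0 ≤ μ i := by linarith
    exact mul_le_mul_of_nonneg_right hri this
  have hkey := key n hn le_rfl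
  have hμn := hμpos n (by omega) le_rfl
  have hrn' : 1 ≤ |r n| := by
    rcases abs_pos.mpr hrn with h
    omega
  calc |∑ i ∈ Finset.Icc 1 (n - 1), r i * μ i|
      ≤ ∑ i ∈ Finset.Icc 1 (n - 1), (a i - 2) * μ i := habs
    _ < μ n := hkey
    _ ≤ |r n| * μ n := le_mul_of_one_le_left (by linarith) hrn'
    _ = |r n * μ n| := by rw [abs_mul, abs_of_pos (by linarith : (0:ℤ) < μ n)]
end

section
/- Let $n\ge 1$, integers $a_1,\dots,a_n\ge 2$, sequence $\mu_1=1$, $\mu_2=a_1$, $\mu_i=a_{i-1}\mu_{i-1}-\mu_{i-2}$, and integers $r_1,\dots,r_n$ with $|r_i|\le a_i-2$. If $\sum_{i=1}^{n} r_i\mu_i = 0$, then $r_i=0$ for all $i$. -/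
theorem stmt_7 (n : ℕ) (hn : 1 ≤ n) (a μ r : ℕ → ℤ)
    (ha : ∀ i, 1 ≤ i → i ≤ n → 2 ≤ a i)
    (hμ1 : μ 1 = 1) (hμ2 : μ 2 = a 1)
    (hμ : ∀ i, 3 ≤ i → i ≤ n → μ i = a (i - 1) * μ (i - 1) - μ (i - 2))
    (hr : ∀ i, 1 ≤ i → i ≤ n → |r i| ≤ a i - 2)
    (hsum : ∑ i ∈ Finset.Icc 1 n, r i * μ i = 0) :
    ∀ i, 1 ≤ i → i ≤ n → r i = 0 := by
  -- monotonicity / positivity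
  have H : ∀ k, 2 ≤ k → k ≤ n → 0 < μ (k - 1) ∧ μ (k - 1) < μ k := by
    intro k hk2
    induction k, hk2 using Nat.le_induction with
    | base =>
      intro hkn
      have h1 := ha 1 le_rfl hn
      constructor
      · show 0 < μ 1; rw [hμ1]; norm_num
      · show μ 1 < μ 2; rw [hμ1, hμ2]; linarith
    | succ k hk ih =>
      intro hkn
      have hk' : k ≤ n := le_trans (Nat.le_succ k) hkn
      obtain ⟨h1, h2⟩ := ih hk'
      have hrec := hμ (k + 1) (by omega) hkn
      have hak := ha k (by omega) hk'
      have e1 : k + 1 - 1 = k := by omega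
      have e2 : k + 1 - 2 = k - 1 := by omega
      rw [e1, e2] at hrec
      have hμk : 0 < μ k := lt_trans h1 h2
      constructor
      · simpa [e1] using hμk
      · rw [e1, hrec]; nlinarith
  have hpos : ∀ k, 1 ≤ k → k ≤ n → 0 < μ k := by
    intro k h1 h2
    rcases Nat.lt_or_ge k 2 with h | h
    · interval_cases k; rw [hμ1]; norm_num
    · exact lt_trans (H k h h2).1 (H k h h2).2
  -- bound on partial sums of (a i - 2) * μ i
  have hS : ∀ k, 1 ≤ k → k < n →
      ∑ i ∈ Finset.Icc 1 k, (a i - 2) * μ i ≤ μ (k + 1) - μ k - 1 := by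
    intro k hk1
    induction k, hk1 using Nat.le_induction with
    | base =>
      intro hkn
      simp only [Finset.Icc_self, Finset.sum_singleton]
      rw [hμ1, hμ2]; ring_nf; omega
    | succ k hk ih =>
      intro hkn
      have hk' : k < n := by omega
      have hsplit := Finset.sum_Icc_succ_top (by omega : 1 ≤ k + 1)
        (fun i => (a i - 2) * μ i)
      rw [hsplit]
      have hrec := hμ (k + 2) (by omega) (by omega)
      have e1 : k + 2 - 1 = k + 1 := by omega
      have e2 : k + 2 - 2 = k := by omega
      rw [e1, e2] at hrec
      have := ih hk'
      have : (k:ℕ) + 1 + 1 = k + 2 := rfl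
      rw [this, hrec]
      have hb := ih hk'
      linarith
  -- main downward induction
  have main : ∀ m, m ≤ n → (∑ i ∈ Finset.Icc 1 m, r i * μ i = 0) →
      ∀ j, 1 ≤ j → j ≤ m → r j = 0 := by
    intro m
    induction m with
    | zero => intro _ _ j hj1 hj2; omega
    | succ m ih =>
      intro hmn hzero j hj1 hj2
      -- first show r (m+1) = 0
      have hsplit := Finset.sum_Icc_succ_top (by omega : 1 ≤ m + 1)
        (fun i => r i * μ i)
      rw [hsplit] at hzero
      have hrtop : r (m + 1) = 0 := by
        rcases Nat.eq_zero_or_pos m with hm0 | hm1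
        · subst hm0
          simp at hzero
          rw [hμ1] at hzero
          simpa using hzero
        · -- m ≥ 1
          have habs : |r (m + 1) * μ (m + 1)| = |∑ i ∈ Finset.Icc 1 m, r i * μ i| := by
            have : r (m + 1) * μ (m + 1) = -(∑ i ∈ Finset.Icc 1 m, r i * μ i) := by
              linarith
            rw [this, abs_neg]
          have htri : |∑ i ∈ Finset.Icc 1 m, r i * μ i| ≤
              ∑ i ∈ Finset.Icc 1 m, (a i - 2) * μ i := by
            refine le_trans (Finset.abs_sum_le_sum_abs _ _) ?_
            apply Finset.sum_le_sum
            intro i hi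
            simp only [Finset.mem_Icc] at hi
            have hi1 : 1 ≤ i := hi.1
            have hi2 : i ≤ n := by omega
            rw [abs_mul, abs_of_pos (hpos i hi1 hi2)]
            exact mul_le_mul_of_nonneg_right (hr i hi1 hi2) (le_of_lt (hpos i hi1 hi2))
          have hb := hS m hm1 (by omega)
          have hμm : 0 < μ m := hpos m hm1 (by omega)
          have hμm1 : 0 < μ (m + 1) := hpos (m + 1) (by omega) hmn
          have h1 : |r (m + 1)| * μ (m + 1) < μ (m + 1) := by
            rw [← abs_of_pos hμm1, ← abs_mul]
            calc |r (m + 1) * μ (m + 1)| ≤ μ (m + 1) - μ m - 1 := by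
                  rw [habs]; exact le_trans htri hb
              _ < |μ (m + 1)| := by rw [abs_of_pos hμm1]; linarith
          have h2 : |r (m + 1)| < 1 := by
            by_contra hc
            push_neg at hc
            nlinarith [abs_nonneg (r (m + 1))]
          have : |r (m + 1)| ≤ 0 := by omega
          exact abs_nonpos_iff.mp this
      rcases Nat.lt_or_ge j (m + 1) with hj | hj
      · have hzero' : ∑ i ∈ Finset.Icc 1 m, r i * μ i = 0 := by
          rw [hrtop] at hzero; linarith
        exact ih (by omega) hzero' j hj1 (by omega)
      · have : j = m + 1 := by omega
        rw [this]; exact hrtop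
  exact fun i h1 h2 => main n le_rfl hsum i h1 h2
end

section
/- Let $n\ge 1$, integers $a_1,\dots,a_n\ge 2$, and $\Delta$ defined by $\Delta[-1]=0$, $\Delta[0]=1$, $\Delta[i]=-a_i\Delta[i-1]-\Delta[i-2]$. Let integers $r_1,\dots,r_n$ satisfy $|r_i|\le a_i-2$. Then $|\Delta[n]| > \left|\sum_{i=1}^n r_i\Delta[i-1]\right|$. -/
/-- `D k` denotes `Δ[k-1]`, so `Δ[n] = D (n+1)` and `Δ[i-1] = D i`. -/
theorem stmt_8 (n : ℕ) (hn : 1 ≤ n) (a D r : ℕ → ℤ)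
    (ha : ∀ i, 1 ≤ i → i ≤ n → 2 ≤ a i)
    (hD0 : D 0 = 0) (hD1 : D 1 = 1)
    (hD : ∀ i, 1 ≤ i → i ≤ n → D (i + 1) = -a i * D i - D (i - 1))
    (hr : ∀ i, 1 ≤ i → i ≤ n → |r i| ≤ a i - 2) :
    |∑ i ∈ Finset.Icc 1 n, r i * D i| < |D (n + 1)| := by
  set E : ℕ → ℤ := fun k => (-1) ^ (k + 1) * D k with hE
  have habsE : ∀ k, |E k| = |D k| := by
    intro k
    simp [hE, abs_mul, abs_pow]
  have hrec : ∀ j, j + 1 ≤ n → E (j + 2) = a (j + 1) * E (j + 1) - E j := by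
    intro j h2
    have hd := hD (j + 1) (by omega) h2
    simp only [Nat.add_sub_cancel] at hd
    have hc2 : ((-1 : ℤ)) ^ (j + 1 + 1) = -(-1 : ℤ) ^ (j + 1) := by
      rw [pow_succ]; ring
    have hc3 : ((-1 : ℤ)) ^ (j + 2 + 1) = (-1 : ℤ) ^ (j + 1) := by
      rw [pow_succ, pow_succ]; ring
    simp only [hE, hc2, hc3, hd]
    ring
  have hA : ∀ m, m ≤ n → E m + 1 ≤ E (m + 1) ∧ (m : ℤ) ≤ E m := by
    intro m
    induction m with
    | zero =>
      intro _
      constructor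
      · simp [hE, hD0, hD1]
      · simp [hE, hD0]
    | succ j ih =>
      intro hjn
      obtain ⟨h1, h2⟩ := ih (by omega)
      have hrecj := hrec j hjn
      have haj := ha (j + 1) (by omega) hjn
      have hEj1 : (j : ℤ) + 1 ≤ E (j + 1) := by linarith
      constructor
      · have : 2 * E (j + 1) ≤ a (j + 1) * E (j + 1) := by nlinarith
        rw [hrecj] at *
        linarith
      · push_cast
        linarith
  have hB : ∀ m, m ≤ n → |∑ i ∈ Finset.Icc 1 m, r i * D i| ≤ E (m + 1) - E m := by
    intro m
    induction m with
    | zero =>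
      intro _
      simp [hE, hD0, hD1]
    | succ j ih =>
      intro hjn
      have hsum : ∑ i ∈ Finset.Icc 1 (j + 1), r i * D i
          = (∑ i ∈ Finset.Icc 1 j, r i * D i) + r (j + 1) * D (j + 1) := by
        rw [Finset.sum_Icc_succ_top (by omega)]
      have ihj := ih (by omega)
      obtain ⟨h1, h2⟩ := hA j (by omega)
      have hEj1 : (0 : ℤ) ≤ E (j + 1) := by linarith [(hA (j+1) hjn).2]
      have habs : |D (j + 1)| = E (j + 1) := by
        rw [← habsE, abs_of_nonneg hEj1]
      have hrj := hr (j + 1) (by omega) hjn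
      have haj := ha (j + 1) (by omega) hjn
      have hrecj := hrec j hjn
      have hb : |r (j + 1) * D (j + 1)| ≤ (a (j + 1) - 2) * E (j + 1) := by
        rw [abs_mul, habs]
        exact mul_le_mul_of_nonneg_right hrj hEj1
      calc |∑ i ∈ Finset.Icc 1 (j + 1), r i * D i|
          ≤ |∑ i ∈ Finset.Icc 1 j, r i * D i| + |r (j + 1) * D (j + 1)| := by
            rw [hsum]; exact abs_add_le _ _
        _ ≤ (E (j + 1) - E j) + (a (j + 1) - 2) * E (j + 1) := by linarith
        _ = E (j + 2) - E (j + 1) := by rw [hrecj]; ring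
  have hBn := hB n le_rfl
  obtain ⟨h1, h2⟩ := hA n le_rfl
  have hEn1 : (0 : ℤ) < E (n + 1) := by
    have : (1 : ℤ) ≤ (n : ℤ) := by exact_mod_cast hn
    linarith
  have : |D (n + 1)| = E (n + 1) := by rw [← habsE, abs_of_nonneg hEn1.le]
  rw [this]
  have hEn : (1 : ℤ) ≤ E n := by
    have : (1 : ℤ) ≤ (n : ℤ) := by exact_mod_cast hn
    linarith
  linarith
end

section
/- Let $n\ge 1$, integers $a_1,\dots,a_n\ge 2$, the sequence $\mu_1=1$, $\mu_2=a_1$, $\mu_i=a_{i-1}\mu_{i-1}-\mu_{i-2}$, and integers $r_1,\dots,r_n$ with $|r_i|\le a_i-2$. Let $\Delta[n]$ be as in the recursion $\Delta[-1]=0$, $\Delta[0]=1$, $\Delta[i]=-a_i\Delta[i-1]-\Delta[i-2]$. Then $\sum_{i=1}^n r_i\mu_i \equiv 0 \pmod{\Delta[n]}$ if and only if $\sum_{i=1}^n r_i\mu_i = 0$. -/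
private def mseq (a : ℕ → ℤ) : ℕ → ℤ
  | 0 => 0
  | 1 => 1
  | (i+2) => a (i+1) * mseq a (i+1) - mseq a i

private lemma mseq_succ (a : ℕ → ℤ) (i : ℕ) :
    mseq a (i+2) = a (i+1) * mseq a (i+1) - mseq a i := by
  simp [mseq]

private lemma mseq_pos (a : ℕ → ℤ) (n : ℕ) (ha : ∀ i, 1 ≤ i → i ≤ n → 2 ≤ a i) :
    ∀ i ≤ n, 0 ≤ mseq a i ∧ mseq a i < mseq a (i+1) := by
  intro i
  induction i with
  | zero => intro _; simp [mseq]
  | succ k ih =>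
    intro hk
    obtain ⟨h0, h1⟩ := ih (by omega)
    have ha' := ha (k+1) (by omega) hk
    have e := mseq_succ a k
    refine ⟨by linarith, ?_⟩
    nlinarith [mul_nonneg (by linarith : (0:ℤ) ≤ a (k+1) - 2) (by linarith : (0:ℤ) ≤ mseq a (k+1))]

private lemma mseq_sum (a : ℕ → ℤ) :
    ∀ k, ∑ i ∈ Finset.Icc 1 k, (a i - 2) * mseq a i = mseq a (k+1) - mseq a k - 1 := by
  intro k
  induction k with
  | zero => simp [mseq]
  | succ k ih =>
    rw [Finset.sum_Icc_succ_top (by omega : 1 ≤ k+1), ih, mseq_succ a k]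
    ring

/-- `D k` denotes `Δ[k-1]`, so `Δ[n] = D (n+1)`. -/
theorem stmt_9 (n : ℕ) (hn : 1 ≤ n) (a μ D r : ℕ → ℤ)
    (ha : ∀ i, 1 ≤ i → i ≤ n → 2 ≤ a i)
    (hμ1 : μ 1 = 1) (hμ2 : μ 2 = a 1)
    (hμ : ∀ i, 3 ≤ i → i ≤ n → μ i = a (i - 1) * μ (i - 1) - μ (i - 2))
    (hD0 : D 0 = 0) (hD1 : D 1 = 1)
    (hD : ∀ i, 1 ≤ i → i ≤ n → D (i + 1) = -a i * D i - D (i - 1))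
    (hr : ∀ i, 1 ≤ i → i ≤ n → |r i| ≤ a i - 2) :
    D (n + 1) ∣ (∑ i ∈ Finset.Icc 1 n, r i * μ i) ↔
      ∑ i ∈ Finset.Icc 1 n, r i * μ i = 0 := by
  constructor
  · intro hdvd
    -- μ agrees with mseq
    have hμm : ∀ i, 1 ≤ i → i ≤ n → μ i = mseq a i := by
      intro i
      induction i using Nat.strong_induction_on with
      | _ i ih =>
        intro h1 h2
        match i, h1 with
        | 1, _ => simpa [mseq] using hμ1
        | 2, _ => rw [hμ2]; simp [mseq]
        | (k+3), _ =>
          rw [hμ (k+3) (by omega) h2]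
          have e1 := ih (k+2) (by omega) (by omega) (by omega)
          have e2 := ih (k+1) (by omega) (by omega) (by omega)
          have h3 : k+3-1 = k+2 := rfl
          have h4 : k+3-2 = k+1 := rfl
          rw [h3, h4, e1, e2, mseq_succ a (k+1)]
    -- D in terms of mseq
    have hDm : ∀ i ≤ n, D i = (-1)^(i+1) * mseq a i ∧ D (i+1) = (-1)^i * mseq a (i+1) := by
      intro i
      induction i with
      | zero => refine fun _ => ⟨?_, ?_⟩ <;> simp [hD0, hD1, mseq]
      | succ k ih =>
        intro hk
        obtain ⟨hk1, hk2⟩ := ih (by omega)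
        refine ⟨?_, ?_⟩
        · rw [hk2]; ring_nf
        · rw [hD (k+1) (by omega) hk]
          have h5 : k+1-1 = k := rfl
          rw [h5, hk1, hk2, mseq_succ a k, pow_succ]
          ring
    set S := ∑ i ∈ Finset.Icc 1 n, r i * μ i with hS
    by_contra hS0
    -- bound on |S|
    have hbound : |S| ≤ mseq a (n+1) - mseq a n - 1 := by
      calc |S| ≤ ∑ i ∈ Finset.Icc 1 n, |r i * μ i| := Finset.abs_sum_le_sum_abs _ _
        _ ≤ ∑ i ∈ Finset.Icc 1 n, (a i - 2) * mseq a i := by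
            refine Finset.sum_le_sum ?_
            intro i hi
            rw [Finset.mem_Icc] at hi
            have h0 := (mseq_pos a n ha i hi.2).1
            rw [abs_mul, hμm i hi.1 hi.2, abs_of_nonneg h0]
            exact mul_le_mul_of_nonneg_right (hr i hi.1 hi.2) h0
        _ = mseq a (n+1) - mseq a n - 1 := mseq_sum a n
    have hmn := mseq_pos a n ha n le_rfl
    have hDabs : |D (n+1)| = mseq a (n+1) := by
      rw [(hDm n le_rfl).2, abs_mul, abs_pow, abs_neg, abs_one, one_pow, one_mul,
        abs_of_nonneg (by linarith [hmn.1, hmn.2])]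
    have hdvd' : |D (n+1)| ∣ |S| := (abs_dvd _ _).mpr ((dvd_abs _ _).mpr hdvd)
    have hle := Int.le_of_dvd (abs_pos.mpr hS0) hdvd'
    have := hmn.1
    linarith [hDabs ▸ hle]
  · rintro h; rw [h]; exact dvd_zero _
end

section
/- Let $x_1, x_2$ be positive integers with $x_1 x_2 > 1$, and let $M = \begin{pmatrix} 2x_1 & -1 \\ -1 & 2x_2 \end{pmatrix}$. Then there is no $2\times 2$ integer matrix $A$ with $A M A^T = M$, $|\det A| = 1$, and $\operatorname{trace}(A) = -1$. -/
open Matrix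

theorem stmt_10 (x₁ x₂ : ℤ) (hx₁ : 0 < x₁) (hx₂ : 0 < x₂) (hx : 1 < x₁ * x₂) :
    ¬ ∃ A : Matrix (Fin 2) (Fin 2) ℤ,
      A * !![2 * x₁, -1; -1, 2 * x₂] * Aᵀ = !![2 * x₁, -1; -1, 2 * x₂] ∧
      |A.det| = 1 ∧ A.trace = -1 := by
  rintro ⟨A, hM, hdet, htr⟩
  set a := A 0 0 with ha
  set b := A 0 1 with hb'
  set c := A 1 0 with hc'
  set d := A 1 1 with hd'
  have hT : a + d = -1 := by
    simpa [Matrix.trace_fin_two] using htr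
  have hD : a * d - b * c = 1 ∨ a * d - b * c = -1 := by
    rcases (abs_eq (by norm_num : (0:ℤ) ≤ 1)).mp hdet with h | h
    · left; rw [Matrix.det_fin_two] at h; linarith
    · right; rw [Matrix.det_fin_two] at h; linarith
  have h00 : 2 * x₁ * a ^ 2 - 2 * a * b + 2 * x₂ * b ^ 2 = 2 * x₁ := by
    have := congrFun (congrFun hM 0) 0
    simp [Matrix.mul_apply, Fin.sum_univ_two] at this
    linear_combination this
  have h01 : 2 * x₁ * a * c - b * c - a * d + 2 * x₂ * b * d = -1 := by
    have := congrFun (congrFun hM 0) 1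
    simp [Matrix.mul_apply, Fin.sum_univ_two] at this
    linear_combination this
  have h11 : 2 * x₁ * c ^ 2 - 2 * c * d + 2 * x₂ * d ^ 2 = 2 * x₂ := by
    have := congrFun (congrFun hM 1) 1
    simp [Matrix.mul_apply, Fin.sum_univ_two] at this
    linear_combination this
  rcases hD with hD | hD
  · -- det = 1 : rotation of order 3 case
    have hB : 2 * b = 2 * x₁ * (2 * a + 1) := by
      linear_combination (-d) * h00 + b * h01 + (-2 * x₁) * hT + (-b + 2 * x₁ * a) * hD
    have hC : 2 * c = 2 * x₂ * (2 * d + 1) := by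
      linear_combination c * h01 + (-a) * h11 + (-2 * x₂) * hT + (-c + 2 * x₂ * d) * hD
    have key : (4 * x₁ * x₂ - 1) * (2 * a + 1) ^ 2 = 3 := by
      linear_combination (-2 * x₂ - 4 * x₂ * a) * hB + (2 * b) * hC +
        (-4 * a + 8 * x₂ * b) * hT + 4 * hD
    have ht1 : 1 ≤ (2 * a + 1) ^ 2 := by
      rcases le_or_gt 0 a with h | h <;> nlinarith
    nlinarith [key, ht1, hx]
  · -- det = -1 : impossible since a reflection has trace 0
    have key : 2 * (x₁ + x₂) = 0 := by
      linear_combination d * h00 + (-(c + b)) * h01 + a * h11 +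
        (2 * x₁ + 2 * x₂) * hT + (c + b - 2 * x₂ * d - 2 * x₁ * a) * hD
    omega
end

section
/- Let $x_1,x_2$ be positive integers and $M = \begin{pmatrix} 2x_1 & -1 \\ -1 & 2x_2 \end{pmatrix}$. If $A = \begin{pmatrix} a_1 & a_2 \\ a_3 & a_4 \end{pmatrix}$ is an integer matrix with $A M A^T = M$, then $(2x_1-1)a_1^2 + (a_1-a_2)^2 + (2x_2-1)a_2^2 = 2x_1$ and $(2x_1-1)a_3^2 + (a_3-a_4)^2 + (2x_2-1)a_4^2 = 2x_2$; in particular $a_1^2 \le 1$ and $a_4^2 \le 1$. -/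
open Matrix

theorem stmt_11 (x₁ x₂ : ℤ) (hx₁ : 0 < x₁) (hx₂ : 0 < x₂)
    (A : Matrix (Fin 2) (Fin 2) ℤ)
    (hA : A * !![2 * x₁, -1; -1, 2 * x₂] * Aᵀ = !![2 * x₁, -1; -1, 2 * x₂]) :
    (2 * x₁ - 1) * (A 0 0) ^ 2 + (A 0 0 - A 0 1) ^ 2 + (2 * x₂ - 1) * (A 0 1) ^ 2 = 2 * x₁ ∧
    (2 * x₁ - 1) * (A 1 0) ^ 2 + (A 1 0 - A 1 1) ^ 2 + (2 * x₂ - 1) * (A 1 1) ^ 2 = 2 * x₂ ∧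
    (A 0 0) ^ 2 ≤ 1 ∧ (A 1 1) ^ 2 ≤ 1 := by
  set a := A 0 0 with ha
  set b := A 0 1 with hb
  set c := A 1 0 with hc
  set d := A 1 1 with hd
  have hAe : A = !![a, b; c, d] := by
    ext i j; fin_cases i <;> fin_cases j <;> rfl
  rw [hAe] at hA
  simp only [Matrix.transpose, Matrix.mul_fin_two, Matrix.of_apply, Matrix.cons_val',
    Matrix.cons_val_zero, Matrix.cons_val_one, Matrix.head_cons, Matrix.head_fin_const,
    Matrix.empty_val', Matrix.cons_val_fin_one] at hA
  have h00 := congrFun (congrFun hA 0) 0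
  have h01 := congrFun (congrFun hA 0) 1
  have h11 := congrFun (congrFun hA 1) 1
  simp [Matrix.mul_apply, Fin.sum_univ_two, Matrix.transpose_apply] at h00 h01 h11
  have e1 : (2 * x₁ - 1) * a ^ 2 + (a - b) ^ 2 + (2 * x₂ - 1) * b ^ 2 = 2 * x₁ := by
    nlinarith [h00]
  have e2 : (2 * x₁ - 1) * c ^ 2 + (c - d) ^ 2 + (2 * x₂ - 1) * d ^ 2 = 2 * x₂ := by
    nlinarith [h11]
  refine ⟨e1, e2, ?_, ?_⟩
  · by_contra h
    push_neg at h
    have h2 : 2 ≤ a ^ 2 := by omega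
    have habs : 1 < |a| := by nlinarith [sq_abs a, abs_nonneg a]
    have h4 : 4 ≤ a ^ 2 := by
      have : 2 ≤ |a| := habs
      nlinarith [sq_abs a]
    nlinarith [sq_nonneg (a - b), sq_nonneg b]
  · by_contra h
    push_neg at h
    have h2 : 2 ≤ d ^ 2 := by omega
    have habs : 1 < |d| := by nlinarith [sq_abs d, abs_nonneg d]
    have h4 : 4 ≤ d ^ 2 := by
      have : 2 ≤ |d| := habs
      nlinarith [sq_abs d]
    nlinarith [sq_nonneg (c - d), sq_nonneg c]
end

section
/- Let $n\ge 1$ and $a_1,\dots,a_n\ge 2$ integers, with sequences $\mu$ and $\Delta$ defined by $\mu_1=1$, $\mu_2=a_1$, $\mu_i=a_{i-1}\mu_{i-1}-\mu_{i-2}$ and $\Delta[-1]=0$, $\Delta[0]=1$, $\Delta[i]=-a_i\Delta[i-1]-\Delta[i-2]$. Let $r_1,\dots,r_n$ be integers with $|r_i|\le a_i-2$ and $r_i\equiv a_i \pmod 2$ for all $i$. If $\sum_{i=1}^n r_i\mu_i \equiv 0 \pmod{|\Delta[n]|}$, then all $a_i$ are even. -/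
/-- Auxiliary totally-defined sequence: `MM a i = μ i` (with `MM a 0 = 0`). -/
private def MM (a : ℕ → ℤ) : ℕ → ℤ
  | 0 => 0
  | 1 => 1
  | (k+2) => a (k+1) * MM a (k+1) - MM a k

/-- `D k` denotes `Δ[k-1]`, so `Δ[n] = D (n+1)`. -/
theorem stmt_19 (n : ℕ) (hn : 1 ≤ n) (a μ D r : ℕ → ℤ)
    (ha : ∀ i, 1 ≤ i → i ≤ n → 2 ≤ a i)
    (hμ1 : μ 1 = 1) (hμ2 : μ 2 = a 1)
    (hμ : ∀ i, 3 ≤ i → i ≤ n → μ i = a (i - 1) * μ (i - 1) - μ (i - 2))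
    (hD0 : D 0 = 0) (hD1 : D 1 = 1)
    (hD : ∀ i, 1 ≤ i → i ≤ n → D (i + 1) = -a i * D i - D (i - 1))
    (hr : ∀ i, 1 ≤ i → i ≤ n → |r i| ≤ a i - 2)
    (hpar : ∀ i, 1 ≤ i → i ≤ n → r i ≡ a i [ZMOD 2])
    (hsum : (|D (n + 1)|) ∣ ∑ i ∈ Finset.Icc 1 n, r i * μ i) :
    ∀ i, 1 ≤ i → i ≤ n → Even (a i) := by
  -- growth of MM
  have hgrow : ∀ k, k ≤ n → 0 ≤ MM a k ∧ MM a k + 1 ≤ MM a (k+1) := by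
    intro k
    induction k with
    | zero => intro _; simp [MM]
    | succ k ih =>
      intro hk
      obtain ⟨h0, h1⟩ := ih (Nat.le_of_succ_le hk)
      have ha' := ha (k+1) (by omega) hk
      have hdef : MM a (k+2) = a (k+1) * MM a (k+1) - MM a k := rfl
      constructor
      · linarith
      · nlinarith
  have hMpos : ∀ j, j ≤ n → 1 ≤ MM a (j+1) := by
    intro j hj
    obtain ⟨h0, h1⟩ := hgrow j hj
    linarith
  -- μ equals MM
  have hμM : ∀ i, 1 ≤ i → i ≤ n → μ i = MM a i := by
    intro i
    induction i using Nat.strong_induction_on with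
    | _ i ih =>
      intro h1 h2
      match i with
      | 1 => simpa [MM] using hμ1
      | 2 => rw [hμ2]; simp [MM]
      | (k+3) =>
        rw [hμ (k+3) (by omega) h2]
        have e1 : μ (k+3-1) = MM a (k+2) := ih (k+2) (by omega) (by omega) (by omega)
        have e2 : μ (k+3-2) = MM a (k+1) := ih (k+1) (by omega) (by omega) (by omega)
        rw [e1, e2]
        rfl
  -- D in terms of MM
  have hDM : ∀ k, k ≤ n → D (k+1) = (-1:ℤ)^k * MM a (k+1) ∧ D k = -((-1:ℤ)^k) * MM a k := by
    intro k
    induction k with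
    | zero => intro _; constructor <;> simp [MM, hD0, hD1]
    | succ k ih =>
      intro hk
      obtain ⟨h1, h2⟩ := ih (Nat.le_of_succ_le hk)
      have hrec := hD (k+1) (by omega) hk
      have hdef : MM a (k+2) = a (k+1) * MM a (k+1) - MM a k := rfl
      simp only [Nat.add_sub_cancel] at hrec
      constructor
      · rw [hrec, h1, h2, hdef, pow_succ]; ring
      · rw [h1, pow_succ]; ring
  -- sum identity
  have hS : ∀ k, k ≤ n → ∑ i ∈ Finset.Icc 1 k, (a i - 2) * MM a i
      = MM a (k+1) - MM a k - 1 := by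
    intro k
    induction k with
    | zero => intro _; simp [MM]
    | succ k ih =>
      intro hk
      rw [Finset.sum_Icc_succ_top (by omega), ih (by omega)]
      have hdef : MM a (k+2) = a (k+1) * MM a (k+1) - MM a k := rfl
      rw [hdef]; ring
  -- bound
  have hbound : ∀ k, k ≤ n → |∑ i ∈ Finset.Icc 1 k, r i * MM a i|
      ≤ MM a (k+1) - MM a k - 1 := by
    intro k hk
    calc |∑ i ∈ Finset.Icc 1 k, r i * MM a i|
        ≤ ∑ i ∈ Finset.Icc 1 k, |r i * MM a i| := Finset.abs_sum_le_sum_abs _ _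
      _ ≤ ∑ i ∈ Finset.Icc 1 k, (a i - 2) * MM a i := by
          apply Finset.sum_le_sum
          intro i hi
          simp only [Finset.mem_Icc] at hi
          have hM0 : 0 ≤ MM a i := (hgrow i (by omega)).1
          rw [abs_mul, abs_of_nonneg hM0]
          exact mul_le_mul_of_nonneg_right (hr i hi.1 (by omega)) hM0
      _ = MM a (k+1) - MM a k - 1 := hS k hk
  -- the total sum vanishes
  have habsD : |D (n+1)| = MM a (n+1) := by
    obtain ⟨h1, _⟩ := hDM n le_rfl
    rw [h1, abs_mul, abs_pow, abs_neg, abs_one, one_pow, one_mul,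
      abs_of_nonneg (by linarith [hMpos n le_rfl])]
  have hsum' : (|D (n + 1)|) ∣ ∑ i ∈ Finset.Icc 1 n, r i * MM a i := by
    have : ∑ i ∈ Finset.Icc 1 n, r i * μ i = ∑ i ∈ Finset.Icc 1 n, r i * MM a i := by
      apply Finset.sum_congr rfl
      intro i hi
      simp only [Finset.mem_Icc] at hi
      rw [hμM i hi.1 hi.2]
    rwa [this] at hsum
  have hT0 : ∑ i ∈ Finset.Icc 1 n, r i * MM a i = 0 := by
    apply Int.eq_zero_of_abs_lt_dvd hsum'
    rw [habsD]
    have h := hbound n le_rfl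
    have h0 := (hgrow n le_rfl).1
    linarith
  -- all r i = 0
  have hzero : ∀ k, k ≤ n → (∑ i ∈ Finset.Icc 1 k, r i * MM a i) = 0 →
      ∀ i, 1 ≤ i → i ≤ k → r i = 0 := by
    intro k
    induction k with
    | zero => intro _ _ i h1 h2; omega
    | succ k ih =>
      intro hk hsum0 i h1 h2
      have hsplit : ∑ j ∈ Finset.Icc 1 (k+1), r j * MM a j
          = (∑ j ∈ Finset.Icc 1 k, r j * MM a j) + r (k+1) * MM a (k+1) :=
        Finset.sum_Icc_succ_top (by omega) _
      have hb := hbound k (by omega)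
      have hM1 := hMpos k (by omega)
      have hrk : r (k+1) = 0 := by
        have h3 : |r (k+1) * MM a (k+1)| ≤ MM a (k+1) - MM a k - 1 := by
          have heq : r (k+1) * MM a (k+1) = -(∑ j ∈ Finset.Icc 1 k, r j * MM a j) := by
            rw [hsplit] at hsum0; linarith
          rw [heq, abs_neg]; exact hb
        rw [abs_mul, abs_of_nonneg (by linarith : (0:ℤ) ≤ MM a (k+1))] at h3
        have h0 := (hgrow k (by omega)).1
        have hlt : |r (k+1)| * MM a (k+1) < 1 * MM a (k+1) := by linarith
        have : |r (k+1)| < 1 := lt_of_mul_lt_mul_right hlt (by linarith)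
        have hnn := abs_nonneg (r (k+1))
        have : |r (k+1)| = 0 := le_antisymm (by omega) hnn
        exact abs_eq_zero.mp this
      rcases Nat.lt_or_ge i (k+1) with hlt | hge
      · apply ih (by omega) ?_ i h1 (by omega)
        rw [hsplit, hrk] at hsum0
        linarith
      · have : i = k+1 := by omega
        rw [this]; exact hrk
  -- conclude parity
  intro i h1 h2
  have hri : r i = 0 := hzero n le_rfl hT0 i h1 h2
  have hp := hpar i h1 h2
  rw [hri] at hp
  have : (0:ℤ) % 2 = a i % 2 := hp
  rw [Int.even_iff]
  omega
end
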